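/- arXiv:2504.14916 — 3 statements merged into one kernel-verified Lean document; each statement's English description precedes it below -/
import Mathlib

section
/- For every odd integer n ≥ 3, the Sombor characteristic polynomial of the order super commuting graph Δ^o(Q_{4n}) of the generalized quaternion group Q_{4n} equals (x + (4n−1)·√2) · (x + (2n−1)·√2)^{2n−3} · (x + (2n+1)·√2)^{2n−1} · [ (x − (4n−1)·√2)·(x − (2n−1)(2n−3)·√2)·(x − (2n−1)(2n+1)·√2) − 8(n−1)(10n² − 6n + 1)·(x − (2n−1)(2n+1)·√2) − 8n(10n² − 2n + 1)·(x − (2n−1)(2n−3)·√2) ]. -/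
open Polynomial
open scoped Classical

/-- Degree of a vertex. -/
noncomputable def sdeg {V : Type*} (G : SimpleGraph V) (v : V) : ℕ := {u | G.Adj v u}.ncard

/-- Sombor matrix of a graph. -/
noncomputable def somborMatrix {V : Type*} (G : SimpleGraph V) : Matrix V V ℝ :=
  Matrix.of fun u v =>
    if G.Adj u v then Real.sqrt ((sdeg G u : ℝ) ^ 2 + (sdeg G v : ℝ) ^ 2) else 0

/-- Sombor characteristic polynomial det(x·I − S(Γ)). -/
noncomputable def somborCharpoly {V : Type*} [Fintype V] [DecidableEq V] (G : SimpleGraph V) :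
    Polynomial ℝ :=
  (somborMatrix G).charpoly

noncomputable def rt2 : ℝ := Real.sqrt 2

/-- The `R`-super `Γ` graph. -/
def superGraph {V : Type*} (A : SimpleGraph V) (r : V → V → Prop) (hr : Equivalence r) :
    SimpleGraph V where
  Adj x y := x ≠ y ∧ (r x y ∨ ∃ x' y', r x x' ∧ r y y' ∧ A.Adj x' y')
  symm := by
    constructor
    rintro x y ⟨hxy, h | ⟨x', y', hx, hy, hadj⟩⟩
    · exact ⟨hxy.symm, Or.inl (hr.symm h)⟩
    · exact ⟨hxy.symm, Or.inr ⟨y', x', hy, hx, hadj.symm⟩⟩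
  loopless := by constructor; rintro x ⟨h, -⟩; exact h rfl

/-- Same-order relation. -/
def orderRel (G : Type*) [Monoid G] : G → G → Prop := fun x y => orderOf x = orderOf y

theorem orderRel_equivalence (G : Type*) [Monoid G] : Equivalence (orderRel G) :=
  ⟨fun _ => rfl, fun h => h.symm, fun h1 h2 => h1.trans h2⟩

/-- Conjugacy relation. -/
def conjRel (G : Type*) [Group G] : G → G → Prop := fun x y => ∃ a : G, x = a * y * a⁻¹

theorem conjRel_equivalence (G : Type*) [Group G] : Equivalence (conjRel G) := by
  constructor
  · intro x; exact ⟨1, by simp⟩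
  · rintro x y ⟨a, rfl⟩; exact ⟨a⁻¹, by group⟩
  · rintro x y z ⟨a, rfl⟩ ⟨b, rfl⟩; exact ⟨a * b, by group⟩

/-- Commuting graph. -/
def commutingGraph (G : Type*) [Group G] : SimpleGraph G where
  Adj x y := x ≠ y ∧ x * y = y * x
  symm := by constructor; rintro x y ⟨h, c⟩; exact ⟨h.symm, c.symm⟩
  loopless := by constructor; rintro x ⟨h, -⟩; exact h rfl

/-- Power graph. -/
def powerGraph (G : Type*) [Group G] : SimpleGraph G where
  Adj x y := x ≠ y ∧ (x ∈ Subgroup.zpowers y ∨ y ∈ Subgroup.zpowers x)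
  symm := by constructor; rintro x y ⟨h, c⟩; exact ⟨h.symm, c.symm⟩
  loopless := by constructor; rintro x ⟨h, -⟩; exact h rfl

/-- Enhanced power graph. -/
def enhancedPowerGraph (G : Type*) [Group G] : SimpleGraph G where
  Adj x y := x ≠ y ∧ ∃ z : G, x ∈ Subgroup.zpowers z ∧ y ∈ Subgroup.zpowers z
  symm := by constructor; rintro x y ⟨h, z, hx, hy⟩; exact ⟨h.symm, z, hy, hx⟩
  loopless := by constructor; rintro x ⟨h, -⟩; exact h rfl

section Conj
variable {N : Type*} [Fintype N] [DecidableEq N] {R : Type*} [CommRing R]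

theorem charpoly_conj' (A B T : Matrix N N R) (h : A * B = 1) :
    (A * T * B).charpoly = T.charpoly := by
  have h' : B * A = 1 := mul_eq_one_comm.mp h
  have h1 : (A.map (C : R →+* R[X])) * (B.map C) = 1 := by
    rw [← Matrix.map_mul, h, Matrix.map_one _ (map_zero C) (map_one C)]
  have key : (A * T * B).charmatrix = A.map C * T.charmatrix * B.map C := by
    unfold Matrix.charmatrix
    rw [Matrix.mul_sub, Matrix.sub_mul]
    congr 1
    · rw [Matrix.scalar_apply, ← Matrix.smul_one_eq_diagonal, Matrix.mul_smul, Matrix.smul_mul,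
        Matrix.mul_one, h1]
    · rw [RingHom.mapMatrix_apply, RingHom.mapMatrix_apply, ← Matrix.map_mul, ← Matrix.map_mul]
  rw [Matrix.charpoly, key, Matrix.det_mul, Matrix.det_mul, mul_comm, ← mul_assoc,
    ← Matrix.det_mul, ← Matrix.map_mul, h', Matrix.map_one _ (map_zero C) (map_one C),
    Matrix.det_one, one_mul, Matrix.charpoly]
end Conj

section Blowup
variable {κ : Type*} [Fintype κ] [DecidableEq κ]

noncomputable def blowup (m : κ → ℕ) (W : κ → κ → ℝ) :
    Matrix (Σ k : κ, Fin (m k)) (Σ k : κ, Fin (m k)) ℝ :=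
  Matrix.of fun x y => if x = y then 0 else W x.1 y.1

noncomputable def quotMat (m : κ → ℕ) (W : κ → κ → ℝ) : Matrix κ κ ℝ :=
  Matrix.of fun k l => (m l : ℝ) * W k l - if k = l then W k k else 0

lemma sum_ite_val {M c : ℕ} (h : c < M) (f : Fin M → ℝ) :
    (∑ i : Fin M, if (i : ℕ) = c then f i else 0) = f ⟨c, h⟩ := by
  rw [Fintype.sum_eq_single (⟨c, h⟩ : Fin M), if_pos rfl]
  intro b hb
  rw [if_neg fun hb' => hb (Fin.ext hb')]

lemma sum_ite_val_one {M c : ℕ} (h : c < M) :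
    (∑ i : Fin M, if (i : ℕ) = c then (1:ℝ) else 0) = 1 :=
  sum_ite_val h fun _ => 1


lemma inner_sum_const {M : ℕ} (d : ℝ) : ∑ _i : Fin M, d = (M : ℝ) * d := by
  rw [Finset.sum_const, Finset.card_univ, Fintype.card_fin, nsmul_eq_mul]

lemma inner2 {M c : ℕ} (hc : c < M) (h0 : 0 < M) :
    ∑ i : Fin M, ((if (i:ℕ) = c then (1:ℝ) else 0) - (if (i:ℕ) = 0 then 1 else 0)) = 0 := by
  rw [Finset.sum_sub_distrib, sum_ite_val_one hc, sum_ite_val_one h0, sub_self]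

lemma inner3 {M c : ℕ} (hc : c < M) (d : ℝ) (hd : (M:ℝ) * d = 1) :
    ∑ i : Fin M, ((if (i:ℕ) = c then (1:ℝ) else 0) - d) = 0 := by
  rw [Finset.sum_sub_distrib, sum_ite_val_one hc, inner_sum_const, hd, sub_self]

lemma sum_ind_mul_ind {M c c' : ℕ} (hc : c < M) :
    ∑ i : Fin M, (if (i:ℕ) = c then (1:ℝ) else 0) * (if (i:ℕ) = c' then (1:ℝ) else 0) =
      if c = c' then 1 else 0 := by
  have h : ∀ i : Fin M, (if (i:ℕ) = c then (1:ℝ) else 0) * (if (i:ℕ) = c' then (1:ℝ) else 0)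
      = if (i:ℕ) = c then (if c = c' then (1:ℝ) else 0) else 0 := by
    intro i
    by_cases h1 : (i:ℕ) = c
    · subst h1; simp
    · simp [h1]
  rw [Finset.sum_congr rfl fun i _ => h i, sum_ite_val hc]

lemma inner4 {M c c' : ℕ} (hc : c < M) (hc' : c' < M) (hc0 : c ≠ 0) (d : ℝ)
    (hd : (M:ℝ) * d = 1) :
    ∑ i : Fin M, ((if (i:ℕ) = c then (1:ℝ) else 0) - d) *
      ((if (i:ℕ) = c' then (1:ℝ) else 0) - (if (i:ℕ) = 0 then 1 else 0)) =
      if c = c' then 1 else 0 := by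
  have h0 : 0 < M := Nat.pos_of_ne_zero (by omega)
  have expand : ∀ i : Fin M, ((if (i:ℕ) = c then (1:ℝ) else 0) - d) *
      ((if (i:ℕ) = c' then (1:ℝ) else 0) - (if (i:ℕ) = 0 then 1 else 0)) =
      ((if (i:ℕ) = c then (1:ℝ) else 0) * (if (i:ℕ) = c' then (1:ℝ) else 0)
        - (if (i:ℕ) = c then (1:ℝ) else 0) * (if (i:ℕ) = 0 then (1:ℝ) else 0))
      - (d * (if (i:ℕ) = c' then (1:ℝ) else 0) - d * (if (i:ℕ) = 0 then (1:ℝ) else 0)) := by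
    intro i; ring
  rw [Finset.sum_congr rfl fun i _ => expand i, Finset.sum_sub_distrib, Finset.sum_sub_distrib,
    Finset.sum_sub_distrib, ← Finset.mul_sum, ← Finset.mul_sum, sum_ind_mul_ind hc,
    sum_ind_mul_ind hc, sum_ite_val_one hc', sum_ite_val_one h0, if_neg hc0]
  ring

variable (m : κ → ℕ) (W : κ → κ → ℝ)

/-- Column basis: class indicator vectors (inl) and difference vectors (inr). -/
noncomputable def Pmat : Matrix (Σ k : κ, Fin (m k)) (κ ⊕ Σ k : κ, Fin (m k - 1)) ℝ :=
  Matrix.of fun x s =>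
    Sum.elim (fun l => if x.1 = l then (1:ℝ) else 0)
      (fun y => if x.1 = y.1 then
        (if (x.2 : ℕ) = (y.2 : ℕ) + 1 then (1:ℝ) else 0) - (if (x.2 : ℕ) = 0 then 1 else 0)
        else 0) s

noncomputable def Qmat : Matrix (κ ⊕ Σ k : κ, Fin (m k - 1)) (Σ k : κ, Fin (m k)) ℝ :=
  Matrix.of fun s x =>
    Sum.elim (fun l => if x.1 = l then ((m x.1 : ℝ))⁻¹ else 0)
      (fun y => if x.1 = y.1 then
        (if (x.2 : ℕ) = (y.2 : ℕ) + 1 then (1:ℝ) else 0) - (m x.1 : ℝ)⁻¹ else 0) s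

noncomputable def Tmat : Matrix (κ ⊕ Σ k : κ, Fin (m k - 1)) (κ ⊕ Σ k : κ, Fin (m k - 1)) ℝ :=
  Matrix.fromBlocks (quotMat m W) 0 0 (Matrix.diagonal fun y : Σ k : κ, Fin (m k - 1) => - W y.1 y.1)

theorem QP_eq_one (hm : ∀ k, 1 ≤ m k) : Qmat m * Pmat m = 1 := by
  have hd : ∀ k, (m k : ℝ) * (m k : ℝ)⁻¹ = 1 := fun k =>
    mul_inv_cancel₀ (Nat.cast_ne_zero.mpr (by have := hm k; omega))
  ext s t
  rw [Matrix.mul_apply, ← Finset.univ_sigma_univ, Finset.sum_sigma]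
  obtain l | ⟨l, j⟩ := s <;> obtain l' | ⟨l', j'⟩ := t
  · -- inl, inl
    have hterm : ∀ k, (∑ i : Fin (m k), Qmat m (Sum.inl l) ⟨k, i⟩ * Pmat m ⟨k, i⟩ (Sum.inl l')) =
        if k = l then (if k = l' then (1:ℝ) else 0) else 0 := by
      intro k
      by_cases h1 : k = l
      · subst h1
        by_cases h2 : k = l'
        · subst h2
          simp [Qmat, Pmat, inner_sum_const, hd]
        · simp [Qmat, Pmat, h2]
      · simp [Qmat, Pmat, h1]
    rw [Finset.sum_congr rfl fun k _ => hterm k]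
    simp [Matrix.one_apply, Finset.sum_ite_eq']
  · -- inl, inr
    have hterm : ∀ k, (∑ i : Fin (m k),
        Qmat m (Sum.inl l) ⟨k, i⟩ * Pmat m ⟨k, i⟩ (Sum.inr ⟨l', j'⟩)) = 0 := by
      intro k
      by_cases h1 : k = l
      · subst h1
        by_cases h2 : k = l'
        · subst h2
          have hj : ((j' : ℕ) + 1) < m k := by have := j'.isLt; omega
          have h0 : 0 < m k := by have := hm k; omega
          simp only [Qmat, Pmat, Matrix.of_apply, Sum.elim_inl, Sum.elim_inr,
            eq_self_iff_true, if_true]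
          rw [← Finset.mul_sum, inner2 hj h0, mul_zero]
        · simp [Qmat, Pmat, h2]
      · simp [Qmat, Pmat, h1]
    rw [Finset.sum_congr rfl fun k _ => hterm k]
    simp [Matrix.one_apply]
  · -- inr, inl
    have hterm : ∀ k, (∑ i : Fin (m k),
        Qmat m (Sum.inr ⟨l, j⟩) ⟨k, i⟩ * Pmat m ⟨k, i⟩ (Sum.inl l')) = 0 := by
      intro k
      by_cases h1 : k = l
      · subst h1
        by_cases h2 : k = l'
        · subst h2
          have hj : ((j : ℕ) + 1) < m k := by have := j.isLt; omega
          simp only [Qmat, Pmat, Matrix.of_apply, Sum.elim_inl, Sum.elim_inr,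
            eq_self_iff_true, if_true, mul_one]
          exact inner3 hj _ (hd k)
        · simp [Qmat, Pmat, h2]
      · simp [Qmat, Pmat, h1]
    rw [Finset.sum_congr rfl fun k _ => hterm k]
    simp [Matrix.one_apply]
  · -- inr, inr
    have hterm : ∀ k, (∑ i : Fin (m k),
        Qmat m (Sum.inr ⟨l, j⟩) ⟨k, i⟩ * Pmat m ⟨k, i⟩ (Sum.inr ⟨l', j'⟩)) =
        if k = l then (if k = l' then (if (j:ℕ) + 1 = (j':ℕ) + 1 then (1:ℝ) else 0) else 0)
          else 0 := by
      intro k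
      by_cases h1 : k = l
      · subst h1
        by_cases h2 : k = l'
        · subst h2
          have hj : ((j : ℕ) + 1) < m k := by have := j.isLt; omega
          have hj' : ((j' : ℕ) + 1) < m k := by have := j'.isLt; omega
          simp only [Qmat, Pmat, Matrix.of_apply, Sum.elim_inr, eq_self_iff_true, if_true]
          rw [inner4 hj hj' (Nat.succ_ne_zero _) _ (hd k)]
        · simp [Qmat, Pmat, h2]
      · simp [Qmat, Pmat, h1]
    rw [Finset.sum_congr rfl fun k _ => hterm k]
    by_cases hl : l = l'
    · subst hl
      rw [Finset.sum_eq_single l]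
      · by_cases hj : j = j'
        · subst hj; simp [Matrix.one_apply]
        · have hne : ¬ ((j:ℕ) + 1 = (j':ℕ) + 1) := by
            simp only [add_left_inj]
            exact fun h => hj (Fin.ext h)
          simp [Matrix.one_apply, hne, Sigma.mk.inj_iff, hj, Fin.val_inj]
      · intro b _ hb; simp [hb]
      · intro h; exact absurd (Finset.mem_univ l) h
    · have hz : ∀ k ∈ Finset.univ, (if k = l then (if k = l' then
          (if (j:ℕ) + 1 = (j':ℕ) + 1 then (1:ℝ) else 0) else 0) else 0) = 0 := by
        intro k _
        by_cases h2 : k = l'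
        · by_cases h1 : k = l
          · exact absurd (h1.symm.trans h2) hl
          · simp [h1]
        · simp [h2]
      rw [Finset.sum_eq_zero hz]
      simp [Matrix.one_apply, Sigma.mk.inj_iff, hl]

lemma sum_off_diag_mul {M : ℕ} (i : Fin M) (c : ℝ) (g : Fin M → ℝ) (hg : ∑ i', g i' = 0) :
    ∑ i' : Fin M, (if i = i' then 0 else c) * g i' = - (c * g i) := by
  have h : ∀ i' : Fin M, (if i = i' then (0:ℝ) else c) * g i' =
      c * g i' - (if i' = i then c * g i' else 0) := by
    intro i'
    by_cases h : i = i'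
    · subst h; simp
    · have h' : ¬ i' = i := fun hh => h hh.symm
      simp [h, h']
  rw [Finset.sum_congr rfl fun i' _ => h i', Finset.sum_sub_distrib, ← Finset.mul_sum, hg,
    mul_zero, Finset.sum_ite_eq' Finset.univ i fun i' => c * g i']
  simp

theorem SP_eq_PT (hm : ∀ k, 1 ≤ m k) : blowup m W * Pmat m = Pmat m * Tmat m W := by
  ext x t
  obtain ⟨k, i⟩ := x
  obtain l | ⟨l, j⟩ := t
  · -- column inl l
    have hL : (blowup m W * Pmat m) ⟨k,i⟩ (Sum.inl l) = quotMat m W k l := by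
      rw [Matrix.mul_apply, ← Finset.univ_sigma_univ, Finset.sum_sigma]
      have hterm : ∀ k', (∑ i' : Fin (m k'),
          blowup m W ⟨k,i⟩ ⟨k',i'⟩ * Pmat m ⟨k',i'⟩ (Sum.inl l)) =
          if k' = l then ((m l : ℝ) * W k l - if k = l then W k k else 0) else 0 := by
        intro k'
        by_cases h1 : k' = l
        · subst h1
          by_cases h2 : k = k'
          · subst h2
            simp only [blowup, Pmat, Matrix.of_apply, Sum.elim_inl, eq_self_iff_true, if_true,
              mul_one, Sigma.mk.inj_iff, heq_eq_eq, true_and]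
            have : ∀ i' : Fin (m k), (if i = i' then (0:ℝ) else W k k) =
                W k k - (if i' = i then W k k else 0) := by
              intro i'
              by_cases h : i = i'
              · subst h; simp
              · have h' : ¬ i' = i := fun hh => h hh.symm
                simp [h, h']
            rw [Finset.sum_congr rfl fun i' _ => this i', Finset.sum_sub_distrib,
              inner_sum_const, Finset.sum_ite_eq' Finset.univ i fun _ => W k k]
            simp
          · simp only [blowup, Pmat, Matrix.of_apply, Sum.elim_inl, eq_self_iff_true, if_true,
              mul_one]
            have : ∀ i' : Fin (m k'), (if (⟨k, i⟩ : Σ k, Fin (m k)) = ⟨k', i'⟩ then (0:ℝ)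
                else W k k') = W k k' := by
              intro i'
              rw [if_neg]
              simp [Sigma.mk.inj_iff, h2]
            rw [Finset.sum_congr rfl fun i' _ => this i', inner_sum_const, if_neg h2]
            ring
        · simp [Pmat, h1]
      rw [Finset.sum_congr rfl fun k' _ => hterm k', Finset.sum_ite_eq' Finset.univ l
        fun _ => ((m l : ℝ) * W k l - if k = l then W k k else 0)]
      simp [quotMat]
    have hR : (Pmat m * Tmat m W) ⟨k,i⟩ (Sum.inl l) = quotMat m W k l := by
      rw [Matrix.mul_apply, Fintype.sum_sum_type]
      have h2 : ∀ y : Σ k, Fin (m k - 1),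
          Pmat m ⟨k,i⟩ (Sum.inr y) * Tmat m W (Sum.inr y) (Sum.inl l) = 0 := by
        intro y; simp [Tmat]
      rw [Finset.sum_congr rfl fun y _ => h2 y, Finset.sum_const, smul_zero, add_zero]
      have h1 : ∀ l' : κ, Pmat m ⟨k,i⟩ (Sum.inl l') * Tmat m W (Sum.inl l') (Sum.inl l) =
          if l' = k then quotMat m W l' l else 0 := by
        intro l'
        by_cases h : l' = k
        · subst h; simp [Pmat, Tmat]
        · have h' : ¬ k = l' := fun hh => h hh.symm
          simp [Pmat, Tmat, h, h']
      rw [Finset.sum_congr rfl fun l' _ => h1 l',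
        Finset.sum_ite_eq' Finset.univ k fun l' => quotMat m W l' l]
      simp
    rw [hL, hR]
  · -- column inr ⟨l, j⟩
    have hgl : ∀ hk : k = l, True := fun _ => trivial
    have hR : (Pmat m * Tmat m W) ⟨k,i⟩ (Sum.inr ⟨l,j⟩) =
        Pmat m ⟨k,i⟩ (Sum.inr ⟨l,j⟩) * (- W l l) := by
      rw [Matrix.mul_apply, Fintype.sum_sum_type]
      have h1 : ∀ l' : κ, Pmat m ⟨k,i⟩ (Sum.inl l') * Tmat m W (Sum.inl l') (Sum.inr ⟨l,j⟩)
          = 0 := by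
        intro l'; simp [Tmat]
      rw [Finset.sum_congr rfl fun l' _ => h1 l', Finset.sum_const, smul_zero, zero_add]
      have h2 : ∀ y : Σ k, Fin (m k - 1),
          Pmat m ⟨k,i⟩ (Sum.inr y) * Tmat m W (Sum.inr y) (Sum.inr ⟨l,j⟩) =
          if y = ⟨l,j⟩ then Pmat m ⟨k,i⟩ (Sum.inr y) * (- W y.1 y.1) else 0 := by
        intro y
        by_cases h : y = ⟨l,j⟩
        · subst h; simp [Tmat, Matrix.diagonal_apply_eq]
        · simp [Tmat, Matrix.diagonal_apply_ne _ h, h]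
      rw [Finset.sum_congr rfl fun y _ => h2 y,
        Finset.sum_ite_eq' Finset.univ (⟨l,j⟩ : Σ k, Fin (m k - 1))
          fun y => Pmat m ⟨k,i⟩ (Sum.inr y) * (- W y.1 y.1)]
      simp
    have hL : (blowup m W * Pmat m) ⟨k,i⟩ (Sum.inr ⟨l,j⟩) =
        Pmat m ⟨k,i⟩ (Sum.inr ⟨l,j⟩) * (- W l l) := by
      rw [Matrix.mul_apply, ← Finset.univ_sigma_univ, Finset.sum_sigma]
      have hterm : ∀ k', (∑ i' : Fin (m k'),
          blowup m W ⟨k,i⟩ ⟨k',i'⟩ * Pmat m ⟨k',i'⟩ (Sum.inr ⟨l,j⟩)) =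
          if k' = l then (if k = l then
            (- (W k k * ((if (i:ℕ) = (j:ℕ)+1 then (1:ℝ) else 0) - (if (i:ℕ) = 0 then 1 else 0))))
            else 0) else 0 := by
        intro k'
        by_cases h1 : k' = l
        · subst h1
          have hj : ((j : ℕ) + 1) < m k' := by have := j.isLt; omega
          have h0 : 0 < m k' := by have := hm k'; omega
          by_cases h2 : k = k'
          · subst h2
            simp only [blowup, Pmat, Matrix.of_apply, Sum.elim_inr, eq_self_iff_true, if_true,
              Sigma.mk.inj_iff, heq_eq_eq, true_and]
            rw [sum_off_diag_mul i (W k k)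
              (fun i' => (if (i':ℕ) = (j:ℕ)+1 then (1:ℝ) else 0) - (if (i':ℕ) = 0 then 1 else 0))
              (inner2 hj h0)]
          · simp only [blowup, Pmat, Matrix.of_apply, Sum.elim_inr, eq_self_iff_true, if_true]
            have : ∀ i' : Fin (m k'), (if (⟨k, i⟩ : Σ k, Fin (m k)) = ⟨k', i'⟩ then (0:ℝ)
                else W k k') * ((if (i':ℕ) = (j:ℕ)+1 then (1:ℝ) else 0) -
                  (if (i':ℕ) = 0 then 1 else 0)) =
                W k k' * ((if (i':ℕ) = (j:ℕ)+1 then (1:ℝ) else 0) -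
                  (if (i':ℕ) = 0 then 1 else 0)) := by
              intro i'
              congr 1
              rw [if_neg]
              simp [Sigma.mk.inj_iff, h2]
            rw [Finset.sum_congr rfl fun i' _ => this i', ← Finset.mul_sum, inner2 hj h0,
              mul_zero, if_neg h2]
        · simp [Pmat, h1]
      rw [Finset.sum_congr rfl fun k' _ => hterm k', Finset.sum_ite_eq' Finset.univ l _]
      simp only [Finset.mem_univ, if_true, Pmat, Matrix.of_apply, Sum.elim_inr]
      by_cases h2 : k = l
      · subst h2; simp; ring
      · simp [h2]
    rw [hL, hR]

lemma charpoly_diagonal' {ι : Type*} [Fintype ι] [DecidableEq ι] (d : ι → ℝ) :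
    (Matrix.diagonal d).charpoly = ∏ i, (X - C (d i)) := by
  have h : (Matrix.diagonal d).charmatrix = Matrix.diagonal (fun i => (X : ℝ[X]) - C (d i)) := by
    ext i j
    by_cases h : i = j
    · subst h; simp [Matrix.charmatrix_apply_eq]
    · simp [Matrix.charmatrix_apply_ne _ _ _ h, Matrix.diagonal_apply_ne _ h]
  rw [Matrix.charpoly, h, Matrix.det_diagonal]

theorem blowup_charpoly (hm : ∀ k, 1 ≤ m k) :
    (blowup m W).charpoly =
      (quotMat m W).charpoly * ∏ k, (X + C (W k k)) ^ (m k - 1) := by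
  have hcard : Fintype.card (κ ⊕ Σ k : κ, Fin (m k - 1)) = Fintype.card (Σ k : κ, Fin (m k)) := by
    rw [Fintype.card_sum, Fintype.card_sigma, Fintype.card_sigma]
    simp only [Fintype.card_fin]
    rw [Finset.card_univ.symm, Finset.card_eq_sum_ones, ← Finset.sum_add_distrib]
    exact Finset.sum_congr rfl fun k _ => by have := hm k; omega
  let e : (κ ⊕ Σ k : κ, Fin (m k - 1)) ≃ (Σ k : κ, Fin (m k)) := Fintype.equivOfCardEq hcard
  have hQP : Qmat m * Pmat m = 1 := QP_eq_one m hm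
  have hPQ : Pmat m * Qmat m = 1 := (Matrix.mul_eq_one_comm_of_equiv e.symm).mpr hQP
  set P0 : Matrix (Σ k : κ, Fin (m k)) (Σ k : κ, Fin (m k)) ℝ :=
    (Pmat m).submatrix id ⇑e.symm with hP0
  set Q0 : Matrix (Σ k : κ, Fin (m k)) (Σ k : κ, Fin (m k)) ℝ :=
    (Qmat m).submatrix ⇑e.symm id with hQ0
  set T0 : Matrix (Σ k : κ, Fin (m k)) (Σ k : κ, Fin (m k)) ℝ :=
    (Tmat m W).submatrix ⇑e.symm ⇑e.symm with hT0
  have hP0Q0 : P0 * Q0 = 1 := by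
    rw [hP0, hQ0, Matrix.submatrix_mul_equiv, hPQ, Matrix.submatrix_id_id]
  have hS : blowup m W = P0 * T0 * Q0 := by
    have h1 : blowup m W * P0 = P0 * T0 := by
      rw [hP0, hT0]
      have hstep : blowup m W * (Pmat m).submatrix id ⇑e.symm =
          (blowup m W * Pmat m).submatrix id ⇑e.symm := by
        ext x y
        simp [Matrix.mul_apply, Matrix.submatrix_apply]
      rw [hstep, SP_eq_PT m W hm, ← Matrix.submatrix_mul_equiv (Pmat m) (Tmat m W) id e.symm
        ⇑e.symm]
    calc blowup m W = blowup m W * (P0 * Q0) := by rw [hP0Q0, Matrix.mul_one]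
    _ = (blowup m W * P0) * Q0 := by rw [Matrix.mul_assoc]
    _ = P0 * T0 * Q0 := by rw [h1]
  rw [hS, charpoly_conj' P0 Q0 (T0) hP0Q0, hT0]
  have : (Tmat m W).submatrix ⇑e.symm ⇑e.symm = Matrix.reindex e e (Tmat m W) := rfl
  rw [this, Matrix.charpoly_reindex e (Tmat m W), Tmat, Matrix.charpoly_fromBlocks_zero₂₁,
    charpoly_diagonal']
  congr 1
  rw [← Finset.univ_sigma_univ, Finset.prod_sigma]
  refine Finset.prod_congr rfl fun k _ => ?_
  rw [Finset.prod_congr rfl fun (j : Fin (m k - 1)) _ => (by rw [map_neg, sub_neg_eq_add] :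
    (X : ℝ[X]) - C (- W k k) = X + C (W k k)), Finset.prod_const, Finset.card_univ,
    Fintype.card_fin]

end Blowup


open QuaternionGroup

section QGraph
variable {n : ℕ}

def qcls : QuaternionGroup n → Fin 3
  | .a i => if i = 0 ∨ i = (n : ZMod (2*n)) then 0 else 1
  | .xa _ => 2

lemma qcls_a (i : ZMod (2*n)) :
    qcls (a i) = if i = 0 ∨ i = (n : ZMod (2*n)) then 0 else 1 := rfl
lemma qcls_xa (i : ZMod (2*n)) : qcls (xa i : QuaternionGroup n) = 2 := rfl

variable [NeZero n]

lemma n_cast_ne_zero : ((n : ℕ) : ZMod (2*n)) ≠ 0 := by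
  intro h
  rw [ZMod.natCast_eq_zero_iff] at h
  have h1 := Nat.le_of_dvd (Nat.pos_of_ne_zero (NeZero.ne n)) h
  have h2 := Nat.pos_of_ne_zero (NeZero.ne n)
  omega

lemma two_smul_zero_iff (i : ZMod (2*n)) :
    i + i = 0 ↔ i = 0 ∨ i = (n : ZMod (2*n)) := by
  haveI : NeZero (2*n) := ⟨by have := NeZero.ne n; omega⟩
  constructor
  · intro h
    have hv : (2*n) ∣ (i.val + i.val) := by
      rw [← ZMod.natCast_eq_zero_iff, Nat.cast_add, ZMod.natCast_zmod_val]
      exact h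
    have hlt : i.val < 2*n := i.val_lt
    obtain ⟨c, hc⟩ := hv
    have hc2 : c < 2 := by
      by_contra h'
      push_neg at h'
      have := Nat.mul_le_mul_left (2*n) h'
      omega
    have : i.val = 0 ∨ i.val = n := by interval_cases c <;> omega
    rcases this with h' | h'
    · left; rw [← ZMod.natCast_zmod_val i, h', Nat.cast_zero]
    · right; rw [← ZMod.natCast_zmod_val i, h']
  · rintro (rfl | rfl)
    · simp
    · rw [← Nat.cast_add, ← two_mul, ZMod.natCast_self]

lemma a_eq_one_iff {i : ZMod (2*n)} : (a i : QuaternionGroup n) = 1 ↔ i = 0 := by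
  rw [one_def]
  constructor
  · intro h; injection h
  · rintro rfl; rfl

lemma orderOf_a_dvd (i : ZMod (2*n)) : orderOf (a i : QuaternionGroup n) ∣ 2*n := by
  rw [orderOf_dvd_iff_pow_eq_one]
  have h : (a i : QuaternionGroup n) = (a 1)^(i.val) := by
    rw [a_one_pow, ZMod.natCast_zmod_val]
  rw [h, ← pow_mul]
  have h2 : i.val * (2*n) = 2*n*i.val := Nat.mul_comm _ _
  rw [h2, pow_mul, a_one_pow_n, one_pow]

lemma orderOf_a_ne_four (hodd : Odd n) (i : ZMod (2*n)) :
    orderOf (a i : QuaternionGroup n) ≠ 4 := by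
  intro h
  have hd := orderOf_a_dvd i
  rw [h] at hd
  obtain ⟨c, hc⟩ := hd
  obtain ⟨k, hk⟩ := hodd
  omega

lemma order4_xa (hodd : Odd n) (x : QuaternionGroup n) (hx : orderOf x = 4) :
    ∃ k, x = xa k := by
  cases x with
  | a i => exact absurd hx (orderOf_a_ne_four hodd i)
  | xa k => exact ⟨k, rfl⟩

lemma sq_a (i : ZMod (2*n)) : (a i : QuaternionGroup n)^2 = a (i + i) := by
  rw [sq, a_mul_a]

lemma ord_an : orderOf (a ((n : ℕ) : ZMod (2*n)) : QuaternionGroup n) = 2 := by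
  haveI : Fact (Nat.Prime 2) := ⟨Nat.prime_two⟩
  apply orderOf_eq_prime
  · rw [sq_a, ← Nat.cast_add, ← two_mul, ZMod.natCast_self, one_def]
  · intro h; exact n_cast_ne_zero (a_eq_one_iff.mp h)

lemma class1_order (hodd : Odd n) {i : ZMod (2*n)} (hi : ¬(i = 0 ∨ i = (n : ZMod (2*n))))
    {x : QuaternionGroup n} (hx : orderOf x = orderOf (a i)) :
    ∃ m, x = a m ∧ ¬(m = 0 ∨ m = ((n : ℕ) : ZMod (2*n))) := by
  cases x with
  | xa k =>
    rw [orderOf_xa] at hx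
    exact absurd hx.symm (orderOf_a_ne_four hodd i)
  | a m =>
    refine ⟨m, rfl, ?_⟩
    rintro (rfl | rfl)
    · rw [show (a (0 : ZMod (2*n)) : QuaternionGroup n) = 1 from rfl, orderOf_one] at hx
      exact hi (Or.inl (a_eq_one_iff.mp (orderOf_eq_one_iff.mp hx.symm)))
    · rw [ord_an] at hx
      have h1 : (a i : QuaternionGroup n)^2 = 1 := by
        rw [hx]; exact pow_orderOf_eq_one _
      rw [sq_a, a_eq_one_iff] at h1
      exact hi ((two_smul_zero_iff i).mp h1)

lemma a_comm_xa_iff (m k : ZMod (2*n)) :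
    (a m : QuaternionGroup n) * xa k = xa k * a m ↔ m + m = 0 := by
  rw [a_mul_xa, xa_mul_a]
  constructor
  · intro h
    have h' : k - m = k + m := by injection h
    linear_combination -h'
  · intro h
    have h' : k - m = k + m := by linear_combination -h
    rw [h']

end QGraph

section QAdj
variable {n : ℕ} [NeZero n]

/-- The order super commuting graph of the quaternion group. -/
def QG (n : ℕ) : SimpleGraph (QuaternionGroup n) :=
  superGraph (commutingGraph (QuaternionGroup n)) (orderRel (QuaternionGroup n))
    (orderRel_equivalence (QuaternionGroup n))

lemma not_adj_12 (hodd : Odd n) {u v : QuaternionGroup n}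
    (hu : qcls u = 1) (hv : qcls v = 2) : ¬ (QG n).Adj u v := by
  obtain ⟨i, rfl, hi⟩ : ∃ i, u = a i ∧ ¬(i = 0 ∨ i = ((n:ℕ) : ZMod (2*n))) := by
    cases u with
    | a i =>
      refine ⟨i, rfl, fun hcond => ?_⟩
      rw [qcls_a, if_pos hcond] at hu
      exact absurd hu (by decide)
    | xa k => rw [qcls_xa] at hu; exact absurd hu (by decide)
  obtain ⟨k, rfl⟩ : ∃ k, v = xa k := by
    cases v with
    | a j =>
      rw [qcls_a] at hv
      split_ifs at hv <;> exact absurd hv (by decide)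
    | xa k => exact ⟨k, rfl⟩
  rintro ⟨hne, horder | ⟨x', y', hx, hy, hne', hcomm⟩⟩
  · exact orderOf_a_ne_four hodd i (horder.trans (orderOf_xa k))
  · obtain ⟨m, rfl, hm⟩ := class1_order hodd hi hx.symm
    obtain ⟨k', rfl⟩ := order4_xa hodd y' (hy.symm.trans (orderOf_xa k))
    exact hm ((two_smul_zero_iff m).mp ((a_comm_xa_iff m k').mp hcomm))

lemma adj_of {u v : QuaternionGroup n} (hne : u ≠ v)
    (h1 : ¬(qcls u = 1 ∧ qcls v = 2)) (h2 : ¬(qcls u = 2 ∧ qcls v = 1)) :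
    (QG n).Adj u v := by
  refine ⟨hne, ?_⟩
  cases u with
  | a i =>
    cases v with
    | a j =>
      exact Or.inr ⟨a i, a j, rfl, rfl, hne, by rw [a_mul_a, a_mul_a, add_comm]⟩
    | xa k =>
      have hcond : i = 0 ∨ i = ((n:ℕ) : ZMod (2*n)) := by
        by_contra hc
        exact h1 ⟨by rw [qcls_a, if_neg hc], rfl⟩
      refine Or.inr ⟨a i, xa k, rfl, rfl, hne, ?_⟩
      rw [a_comm_xa_iff]
      exact (two_smul_zero_iff i).mpr hcond
  | xa k =>
    cases v with
    | a j =>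
      have hcond : j = 0 ∨ j = ((n:ℕ) : ZMod (2*n)) := by
        by_contra hc
        exact h2 ⟨rfl, by rw [qcls_a, if_neg hc]⟩
      refine Or.inr ⟨xa k, a j, rfl, rfl, hne, ?_⟩
      exact ((a_comm_xa_iff j k).mpr ((two_smul_zero_iff j).mpr hcond)).symm
    | xa l =>
      exact Or.inl (by rw [orderRel, orderOf_xa, orderOf_xa])

lemma QG_adj_iff (hodd : Odd n) (u v : QuaternionGroup n) :
    (QG n).Adj u v ↔ u ≠ v ∧ ¬(qcls u = 1 ∧ qcls v = 2) ∧ ¬(qcls u = 2 ∧ qcls v = 1) := by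
  constructor
  · intro h
    refine ⟨h.1, fun ⟨hu, hv⟩ => not_adj_12 hodd hu hv h, fun ⟨hu, hv⟩ => ?_⟩
    exact not_adj_12 hodd hv hu h.symm
  · rintro ⟨hne, h1, h2⟩
    exact adj_of hne h1 h2

end QAdj

section QCard
variable (n : ℕ) [NeZero n]

def mfun (n : ℕ) : Fin 3 → ℕ := ![2, 2*n - 2, 2*n]

def QEquiv : QuaternionGroup n ≃ ZMod (2*n) ⊕ ZMod (2*n) where
  toFun x := match x with | .a i => .inl i | .xa i => .inr i
  invFun s := match s with | .inl i => a i | .inr i => xa i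
  left_inv := by rintro (i | i) <;> rfl
  right_inv := by rintro (i | i) <;> rfl

lemma card_fiber_split (k : Fin 3) :
    Fintype.card {v : QuaternionGroup n // qcls v = k} =
      Fintype.card {i : ZMod (2*n) // qcls (a i : QuaternionGroup n) = k} +
      Fintype.card {i : ZMod (2*n) // qcls (xa i : QuaternionGroup n) = k} := by
  have e0 : {v : QuaternionGroup n // qcls v = k} ≃
      {s : ZMod (2*n) ⊕ ZMod (2*n) // qcls ((QEquiv n).symm s) = k} :=
    (QEquiv n).subtypeEquiv fun v => by rw [Equiv.symm_apply_apply]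
  have e1 : {v : QuaternionGroup n // qcls v = k} ≃
      ({i : ZMod (2*n) // qcls (a i : QuaternionGroup n) = k} ⊕
       {i : ZMod (2*n) // qcls (xa i : QuaternionGroup n) = k}) :=
    e0.trans ((Equiv.subtypeSum).trans
      (Equiv.sumCongr (Equiv.subtypeEquivRight fun i => Iff.rfl)
        (Equiv.subtypeEquivRight fun i => Iff.rfl)))
  rw [Fintype.card_congr e1, Fintype.card_sum]

lemma card_pair_zn : Fintype.card {i : ZMod (2*n) // i = 0 ∨ i = ((n:ℕ) : ZMod (2*n))} = 2 := by
  rw [Fintype.card_subtype]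
  have hfil : (Finset.univ.filter fun i : ZMod (2*n) =>
      i = 0 ∨ i = ((n:ℕ) : ZMod (2*n))) = {0, ((n:ℕ) : ZMod (2*n))} := by
    ext i; simp
  rw [hfil, Finset.card_pair (Ne.symm n_cast_ne_zero)]

lemma card_fiber (k : Fin 3) :
    Fintype.card {v : QuaternionGroup n // qcls v = k} = mfun n k := by
  haveI : NeZero (2*n) := ⟨by have := NeZero.ne n; omega⟩
  have hxa0 : Fintype.card {i : ZMod (2*n) // qcls (xa i : QuaternionGroup n) = 0} = 0 :=
    @Fintype.card_eq_zero _ _ ⟨fun x => absurd x.2 (by rw [qcls_xa]; decide)⟩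
  have hxa1 : Fintype.card {i : ZMod (2*n) // qcls (xa i : QuaternionGroup n) = 1} = 0 :=
    @Fintype.card_eq_zero _ _ ⟨fun x => absurd x.2 (by rw [qcls_xa]; decide)⟩
  have hxa2 : Fintype.card {i : ZMod (2*n) // qcls (xa i : QuaternionGroup n) = 2} = 2*n := by
    rw [Fintype.card_congr (Equiv.subtypeUnivEquiv
      (p := fun i : ZMod (2*n) => qcls (xa i : QuaternionGroup n) = 2) fun i => rfl), ZMod.card]
  have ha0 : Fintype.card {i : ZMod (2*n) // qcls (a i : QuaternionGroup n) = 0} = 2 := by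
    have hiff : ∀ i : ZMod (2*n),
        qcls (a i : QuaternionGroup n) = 0 ↔ (i = 0 ∨ i = ((n:ℕ) : ZMod (2*n))) := by
      intro i
      rw [qcls_a]
      split_ifs with h
      · simp [h]
      · simp [h]
    rw [Fintype.card_congr (Equiv.subtypeEquivRight hiff), card_pair_zn]
  have ha1 : Fintype.card {i : ZMod (2*n) // qcls (a i : QuaternionGroup n) = 1} = 2*n - 2 := by
    have hiff : ∀ i : ZMod (2*n),
        qcls (a i : QuaternionGroup n) = 1 ↔ ¬(i = 0 ∨ i = ((n:ℕ) : ZMod (2*n))) := by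
      intro i
      rw [qcls_a]
      split_ifs with h
      · simp [h]
      · simp [h]
    rw [Fintype.card_congr (Equiv.subtypeEquivRight hiff), Fintype.card_subtype_compl,
      card_pair_zn, ZMod.card]
  have ha2 : Fintype.card {i : ZMod (2*n) // qcls (a i : QuaternionGroup n) = 2} = 0 := by
    refine @Fintype.card_eq_zero _ _ ⟨fun x => ?_⟩
    have h := x.2
    rw [qcls_a] at h
    split_ifs at h <;> exact absurd h (by decide)
  fin_cases k
  · show Fintype.card {v : QuaternionGroup n // qcls v = 0} = mfun n 0
    rw [card_fiber_split, ha0, hxa0]; rfl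
  · show Fintype.card {v : QuaternionGroup n // qcls v = 1} = mfun n 1
    rw [card_fiber_split, ha1, hxa1]; simp [mfun]
  · show Fintype.card {v : QuaternionGroup n // qcls v = 2} = mfun n 2
    rw [card_fiber_split, ha2, hxa2]; simp [mfun]

lemma one_le_mfun (hn : 3 ≤ n) (k : Fin 3) : 1 ≤ mfun n k := by
  fin_cases k <;> simp [mfun] <;> omega

noncomputable def qequivSigma : QuaternionGroup n ≃ Σ k : Fin 3, Fin (mfun n k) :=
  (Equiv.sigmaFiberEquiv (qcls : QuaternionGroup n → Fin 3)).symm.trans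
    (Equiv.sigmaCongrRight fun k =>
      Fintype.equivOfCardEq (by rw [card_fiber, Fintype.card_fin]))

lemma qequivSigma_fst (v : QuaternionGroup n) : (qequivSigma n v).1 = qcls v := rfl

end QCard

section QDeg
variable {n : ℕ} [NeZero n]

def dfun (n : ℕ) : Fin 3 → ℕ := ![4*n - 1, 2*n - 1, 2*n + 1]

lemma sdeg_eq (hn : 3 ≤ n) (hodd : Odd n) (v : QuaternionGroup n) :
    sdeg (QG n) v = dfun n (qcls v) := by
  rw [sdeg, Set.ncard_eq_toFinset_card', Set.toFinset_setOf]
  have hfe : (Finset.univ.filter fun u => (QG n).Adj v u) =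
      (Finset.univ.filter fun u : QuaternionGroup n =>
        ¬(qcls v = 1 ∧ qcls u = 2) ∧ ¬(qcls v = 2 ∧ qcls u = 1)).erase v := by
    ext u
    simp only [Finset.mem_filter, Finset.mem_univ, true_and, Finset.mem_erase]
    rw [QG_adj_iff hodd]
    constructor
    · rintro ⟨hne, hA, hB⟩; exact ⟨Ne.symm hne, hA, hB⟩
    · rintro ⟨hne, hA, hB⟩; exact ⟨Ne.symm hne, hA, hB⟩
  have hmem : v ∈ Finset.univ.filter fun u : QuaternionGroup n =>
      ¬(qcls v = 1 ∧ qcls u = 2) ∧ ¬(qcls v = 2 ∧ qcls u = 1) := by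
    refine Finset.mem_filter.mpr ⟨Finset.mem_univ v, ?_, ?_⟩
    · rintro ⟨h1, h2⟩; rw [h1] at h2; exact absurd h2 (by decide)
    · rintro ⟨h1, h2⟩; rw [h1] at h2; exact absurd h2 (by decide)
  rw [hfe, Finset.card_erase_of_mem hmem]
  have hc : qcls v = 0 ∨ qcls v = 1 ∨ qcls v = 2 := by
    generalize qcls v = c
    fin_cases c <;> decide
  have hcc : (Finset.univ.filter fun u : QuaternionGroup n => qcls u = 1).card = 2*n - 2 := by
    rw [← Fintype.card_subtype]; exact card_fiber n 1
  have hcc2 : (Finset.univ.filter fun u : QuaternionGroup n => qcls u = 2).card = 2*n := by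
    rw [← Fintype.card_subtype]; exact card_fiber n 2
  rcases hc with hv | hv | hv <;> rw [hv]
  · have h1 : (Finset.univ.filter fun u : QuaternionGroup n =>
        ¬((0:Fin 3) = 1 ∧ qcls u = 2) ∧ ¬((0:Fin 3) = 2 ∧ qcls u = 1)) = Finset.univ := by
      apply Finset.filter_true_of_mem
      intro u _
      exact ⟨fun ⟨h,_⟩ => absurd h (by decide), fun ⟨h,_⟩ => absurd h (by decide)⟩
    rw [h1, Finset.card_univ, QuaternionGroup.card]
    rfl
  · have h1 : (Finset.univ.filter fun u : QuaternionGroup n =>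
        ¬((1:Fin 3) = 1 ∧ qcls u = 2) ∧ ¬((1:Fin 3) = 2 ∧ qcls u = 1)) =
        Finset.univ.filter fun u : QuaternionGroup n => ¬(qcls u = 2) := by
      apply Finset.filter_congr
      intro u _
      constructor
      · rintro ⟨hA, _⟩ h2; exact hA ⟨rfl, h2⟩
      · intro h; exact ⟨fun ⟨_, h2⟩ => h h2, fun ⟨h12, _⟩ => absurd h12 (by decide)⟩
    rw [h1, Finset.filter_not, Finset.card_sdiff_of_subset (Finset.filter_subset _ _),
      Finset.card_univ, QuaternionGroup.card, hcc2]
    show 4*n - 2*n - 1 = 2*n - 1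
    omega
  · have h1 : (Finset.univ.filter fun u : QuaternionGroup n =>
        ¬((2:Fin 3) = 1 ∧ qcls u = 2) ∧ ¬((2:Fin 3) = 2 ∧ qcls u = 1)) =
        Finset.univ.filter fun u : QuaternionGroup n => ¬(qcls u = 1) := by
      apply Finset.filter_congr
      intro u _
      constructor
      · rintro ⟨_, hB⟩ h2; exact hB ⟨rfl, h2⟩
      · intro h; exact ⟨fun ⟨h12, _⟩ => absurd h12 (by decide), fun ⟨_, h2⟩ => h h2⟩
    rw [h1, Finset.filter_not, Finset.card_sdiff_of_subset (Finset.filter_subset _ _),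
      Finset.card_univ, QuaternionGroup.card, hcc]
    show 4*n - (2*n - 2) - 1 = 2*n + 1
    omega

end QDeg

section QFinal
variable {n : ℕ} [NeZero n]

noncomputable def Wfun (n : ℕ) : Fin 3 → Fin 3 → ℝ := fun k l =>
  if (k = 1 ∧ l = 2) ∨ (k = 2 ∧ l = 1) then 0
  else Real.sqrt ((dfun n k : ℝ)^2 + (dfun n l : ℝ)^2)

lemma sombor_entry (hn : 3 ≤ n) (hodd : Odd n) (u v : QuaternionGroup n) :
    somborMatrix (QG n) u v = if u = v then 0 else Wfun n (qcls u) (qcls v) := by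
  show (if (QG n).Adj u v then
      Real.sqrt ((sdeg (QG n) u : ℝ)^2 + (sdeg (QG n) v : ℝ)^2) else 0) = _
  by_cases huv : u = v
  · subst huv
    rw [if_neg (QG n).irrefl, if_pos rfl]
  · rw [if_neg huv]
    by_cases hbad : (qcls u = 1 ∧ qcls v = 2) ∨ (qcls u = 2 ∧ qcls v = 1)
    · have hnadj : ¬ (QG n).Adj u v := fun hadj => by
        obtain ⟨_, hA, hB⟩ := (QG_adj_iff hodd u v).mp hadj
        rcases hbad with h | h
        exacts [hA h, hB h]
      rw [if_neg hnadj]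
      simp only [Wfun]
      rw [if_pos hbad]
    · have hadj : (QG n).Adj u v :=
        (QG_adj_iff hodd u v).mpr ⟨huv, fun h => hbad (Or.inl h), fun h => hbad (Or.inr h)⟩
      rw [if_pos hadj]
      simp only [Wfun]
      rw [if_neg hbad, sdeg_eq hn hodd, sdeg_eq hn hodd]

lemma sombor_eq (hn : 3 ≤ n) (hodd : Odd n) :
    somborMatrix (QG n) =
      (blowup (mfun n) (Wfun n)).submatrix (qequivSigma n) (qequivSigma n) := by
  ext u v
  rw [Matrix.submatrix_apply, sombor_entry hn hodd]
  show _ = if qequivSigma n u = qequivSigma n v then 0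
    else Wfun n (qequivSigma n u).1 (qequivSigma n v).1
  rw [qequivSigma_fst, qequivSigma_fst]
  simp only [Equiv.apply_eq_iff_eq]

theorem QG_charpoly (hn : 3 ≤ n) (hodd : Odd n) :
    (somborMatrix (QG n)).charpoly =
      (quotMat (mfun n) (Wfun n)).charpoly *
        ∏ k, (X + C (Wfun n k k)) ^ (mfun n k - 1) := by
  rw [sombor_eq hn hodd]
  have h : (blowup (mfun n) (Wfun n)).submatrix (qequivSigma n) (qequivSigma n) =
      Matrix.reindex (qequivSigma n).symm (qequivSigma n).symm (blowup (mfun n) (Wfun n)) := rfl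
  rw [h, Matrix.charpoly_reindex, blowup_charpoly _ _ (one_le_mfun n hn)]

lemma charpoly_fin_three (M : Matrix (Fin 3) (Fin 3) ℝ) :
    M.charpoly =
      (X - C (M 0 0)) * (X - C (M 1 1)) * (X - C (M 2 2))
      - C (M 1 2 * M 2 1) * (X - C (M 0 0))
      - C (M 0 1 * M 1 0) * (X - C (M 2 2))
      - C (M 0 2 * M 2 0) * (X - C (M 1 1))
      - C (M 0 1 * M 1 2 * M 2 0) - C (M 0 2 * M 1 0 * M 2 1) := by
  rw [Matrix.charpoly, Matrix.det_fin_three,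
    Matrix.charmatrix_apply_eq, Matrix.charmatrix_apply_eq, Matrix.charmatrix_apply_eq,
    Matrix.charmatrix_apply_ne M 0 1 (by decide), Matrix.charmatrix_apply_ne M 0 2 (by decide),
    Matrix.charmatrix_apply_ne M 1 0 (by decide), Matrix.charmatrix_apply_ne M 1 2 (by decide),
    Matrix.charmatrix_apply_ne M 2 0 (by decide), Matrix.charmatrix_apply_ne M 2 1 (by decide)]
  simp only [map_mul]
  ring

lemma sqrt_sq_add_sq_self (c : ℝ) (hc : 0 ≤ c) :
    Real.sqrt (c^2 + c^2) = c * Real.sqrt 2 := by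
  rw [← Real.sqrt_sq (by positivity : (0:ℝ) ≤ c * Real.sqrt 2)]
  congr 1
  rw [mul_pow, Real.sq_sqrt (by norm_num : (0:ℝ) ≤ 2)]
  ring

end QFinal

theorem stmt8 (n : ℕ) [NeZero n] (hn : 3 ≤ n) (hodd : Odd n) :
    somborCharpoly (superGraph (commutingGraph (QuaternionGroup n))
        (orderRel (QuaternionGroup n)) (orderRel_equivalence (QuaternionGroup n))) =
      (X + C ((4 * (n : ℝ) - 1) * rt2)) * (X + C ((2 * (n : ℝ) - 1) * rt2)) ^ (2 * n - 3) *
        (X + C ((2 * (n : ℝ) + 1) * rt2)) ^ (2 * n - 1) *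
        ((X - C ((4 * (n : ℝ) - 1) * rt2)) *
            (X - C ((2 * (n : ℝ) - 1) * (2 * (n : ℝ) - 3) * rt2)) *
            (X - C ((2 * (n : ℝ) - 1) * (2 * (n : ℝ) + 1) * rt2)) -
          C (8 * ((n : ℝ) - 1) * (10 * (n : ℝ) ^ 2 - 6 * (n : ℝ) + 1)) *
            (X - C ((2 * (n : ℝ) - 1) * (2 * (n : ℝ) + 1) * rt2)) -
          C (8 * (n : ℝ) * (10 * (n : ℝ) ^ 2 - 2 * (n : ℝ) + 1)) *
            (X - C ((2 * (n : ℝ) - 1) * (2 * (n : ℝ) - 3) * rt2))) := by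
  have hnr : (3:ℝ) ≤ (n:ℝ) := by exact_mod_cast hn
  have hmain : somborCharpoly (superGraph (commutingGraph (QuaternionGroup n))
      (orderRel (QuaternionGroup n)) (orderRel_equivalence (QuaternionGroup n))) =
      (somborMatrix (QG n)).charpoly := rfl
  rw [hmain, QG_charpoly hn hodd]
  -- weight values
  have hc0 : ((dfun n 0 : ℕ) : ℝ) = 4*(n:ℝ) - 1 := by
    show ((4*n - 1 : ℕ) : ℝ) = _
    rw [Nat.cast_sub (by omega)]
    push_cast; ring
  have hc1 : ((dfun n 1 : ℕ) : ℝ) = 2*(n:ℝ) - 1 := by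
    show ((2*n - 1 : ℕ) : ℝ) = _
    rw [Nat.cast_sub (by omega)]
    push_cast; ring
  have hc2 : ((dfun n 2 : ℕ) : ℝ) = 2*(n:ℝ) + 1 := by
    show ((2*n + 1 : ℕ) : ℝ) = _
    push_cast; ring
  have hW00 : Wfun n 0 0 = (4*(n:ℝ) - 1) * rt2 := by
    simp only [Wfun]
    rw [if_neg (by decide), hc0, rt2]
    exact sqrt_sq_add_sq_self _ (by linarith)
  have hW11 : Wfun n 1 1 = (2*(n:ℝ) - 1) * rt2 := by
    simp only [Wfun]
    rw [if_neg (by decide), hc1, rt2]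
    exact sqrt_sq_add_sq_self _ (by linarith)
  have hW22 : Wfun n 2 2 = (2*(n:ℝ) + 1) * rt2 := by
    simp only [Wfun]
    rw [if_neg (by decide), hc2, rt2]
    exact sqrt_sq_add_sq_self _ (by linarith)
  have hW12 : Wfun n 1 2 = 0 := by
    simp only [Wfun]
    rw [if_pos (by decide)]
  have hW21 : Wfun n 2 1 = 0 := by
    simp only [Wfun]
    rw [if_pos (by decide)]
  have hW0110 : Wfun n 0 1 * Wfun n 1 0 = (4*(n:ℝ)-1)^2 + (2*(n:ℝ)-1)^2 := by
    simp only [Wfun]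
    rw [if_neg (by decide), if_neg (by decide), hc0, hc1,
      show (2*(n:ℝ)-1)^2 + (4*(n:ℝ)-1)^2 = (4*(n:ℝ)-1)^2 + (2*(n:ℝ)-1)^2 from add_comm _ _]
    exact Real.mul_self_sqrt (by positivity)
  have hW0220 : Wfun n 0 2 * Wfun n 2 0 = (4*(n:ℝ)-1)^2 + (2*(n:ℝ)+1)^2 := by
    simp only [Wfun]
    rw [if_neg (by decide), if_neg (by decide), hc0, hc2,
      show (2*(n:ℝ)+1)^2 + (4*(n:ℝ)-1)^2 = (4*(n:ℝ)-1)^2 + (2*(n:ℝ)+1)^2 from add_comm _ _]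
    exact Real.mul_self_sqrt (by positivity)
  -- quotient matrix entries
  have hq00 : quotMat (mfun n) (Wfun n) 0 0 = (4*(n:ℝ) - 1) * rt2 := by
    show ((2:ℕ):ℝ) * Wfun n 0 0 - (if (0 : Fin 3) = 0 then Wfun n 0 0 else 0) = _
    rw [if_pos rfl, hW00]
    push_cast; ring
  have hq11 : quotMat (mfun n) (Wfun n) 1 1 = (2*(n:ℝ) - 1) * (2*(n:ℝ) - 3) * rt2 := by
    show ((2*n - 2:ℕ):ℝ) * Wfun n 1 1 - (if (1 : Fin 3) = 1 then Wfun n 1 1 else 0) = _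
    rw [if_pos rfl, hW11, Nat.cast_sub (by omega)]
    push_cast; ring
  have hq22 : quotMat (mfun n) (Wfun n) 2 2 = (2*(n:ℝ) - 1) * (2*(n:ℝ) + 1) * rt2 := by
    show ((2*n:ℕ):ℝ) * Wfun n 2 2 - (if (2 : Fin 3) = 2 then Wfun n 2 2 else 0) = _
    rw [if_pos rfl, hW22]
    push_cast; ring
  have hq12 : quotMat (mfun n) (Wfun n) 1 2 = 0 := by
    show ((2*n:ℕ):ℝ) * Wfun n 1 2 - (if (1 : Fin 3) = 2 then Wfun n 1 1 else 0) = 0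
    rw [if_neg (by decide), hW12]
    ring
  have hq21 : quotMat (mfun n) (Wfun n) 2 1 = 0 := by
    show ((2*n - 2:ℕ):ℝ) * Wfun n 2 1 - (if (2 : Fin 3) = 1 then Wfun n 2 2 else 0) = 0
    rw [if_neg (by decide), hW21]
    ring
  have hq0110 : quotMat (mfun n) (Wfun n) 0 1 * quotMat (mfun n) (Wfun n) 1 0 =
      8 * ((n:ℝ) - 1) * (10 * (n:ℝ)^2 - 6 * (n:ℝ) + 1) := by
    show (((2*n - 2:ℕ):ℝ) * Wfun n 0 1 - (if (0 : Fin 3) = 1 then Wfun n 0 0 else 0)) *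
      (((2:ℕ):ℝ) * Wfun n 1 0 - (if (1 : Fin 3) = 0 then Wfun n 1 1 else 0)) = _
    rw [if_neg (by decide), if_neg (by decide), sub_zero, sub_zero,
      Nat.cast_sub (by omega : 2 ≤ 2*n), mul_mul_mul_comm, hW0110]
    push_cast; ring
  have hq0220 : quotMat (mfun n) (Wfun n) 0 2 * quotMat (mfun n) (Wfun n) 2 0 =
      8 * (n:ℝ) * (10 * (n:ℝ)^2 - 2 * (n:ℝ) + 1) := by
    show (((2*n:ℕ):ℝ) * Wfun n 0 2 - (if (0 : Fin 3) = 2 then Wfun n 0 0 else 0)) *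
      (((2:ℕ):ℝ) * Wfun n 2 0 - (if (2 : Fin 3) = 0 then Wfun n 2 2 else 0)) = _
    rw [if_neg (by decide), if_neg (by decide), sub_zero, sub_zero,
      mul_mul_mul_comm, hW0220]
    push_cast; ring
  -- the product over the three classes
  rw [Fin.prod_univ_three]
  have he0 : mfun n 0 - 1 = 1 := rfl
  have he1 : mfun n 1 - 1 = 2*n - 3 := by
    show 2*n - 2 - 1 = 2*n - 3
    omega
  have he2 : mfun n 2 - 1 = 2*n - 1 := rfl
  rw [he0, he1, he2, pow_one, hW00, hW11, hW22]
  -- the 3×3 charpoly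
  rw [charpoly_fin_three, hq00, hq11, hq22, hq12, hq21, hq0110, hq0220]
  simp only [mul_zero, zero_mul, map_zero, sub_zero, zero_sub, map_mul]
  ring
end

section
/- For every integer n ≥ 2, the real number −3√2 is a Sombor eigenvalue of the power graph P(Q_{4n}) of the generalized quaternion group Q_{4n} with multiplicity at least n; that is, the kernel of S(P(Q_{4n})) − (−3√2)·I has dimension at least n over ℝ. -/
open Polynomial
open scoped Classical

namespace Stmt17Aux

open QuaternionGroup

variable {n : ℕ}

lemma n_add_n (_hn : 0 < n) : (n : ZMod (2 * n)) + n = 0 := by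
  rw [← Nat.cast_add, show n + n = 2 * n by ring, ZMod.natCast_self]

lemma n_ne_zero (hn : 0 < n) : (n : ZMod (2 * n)) ≠ 0 := by
  rw [Ne, ZMod.natCast_eq_zero_iff]
  intro h
  have := Nat.le_of_dvd hn h
  omega

lemma neg_n (hn : 0 < n) : -(n : ZMod (2 * n)) = n :=
  neg_eq_of_add_eq_zero_left (n_add_n hn)

lemma not_xa_mem_zpowers_a (i j : ZMod (2 * n)) :
    xa i ∉ Subgroup.zpowers (a j) := by
  intro h
  let H : Subgroup (QuaternionGroup n) :=
  { carrier := {g | ∃ k, g = a k}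
    one_mem' := ⟨0, one_def⟩
    mul_mem' := by rintro _ _ ⟨k, rfl⟩ ⟨l, rfl⟩; exact ⟨k + l, rfl⟩
    inv_mem' := by
      rintro _ ⟨k, rfl⟩
      have hk : (a k : QuaternionGroup n)⁻¹ = a (-k) :=
        inv_eq_of_mul_eq_one_right (by rw [a_mul_a, add_neg_cancel]; exact one_def.symm)
      exact ⟨-k, hk⟩ }
  have hle : Subgroup.zpowers (a j) ≤ H := Subgroup.zpowers_le.mpr ⟨j, rfl⟩
  obtain ⟨k, hk⟩ := hle h
  cases hk

lemma xa_zpow_two (i : ZMod (2 * n)) : xa i ^ (2 : ℤ) = a n := by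
  rw [show (2 : ℤ) = ((2 : ℕ) : ℤ) by norm_num, zpow_natCast, xa_sq]

lemma xa_zpow_three (hn : 0 < n) (i : ZMod (2 * n)) :
    xa i ^ (3 : ℤ) = xa (i + (n : ZMod (2 * n))) := by
  rw [show (3 : ℤ) = ((3 : ℕ) : ℤ) by norm_num, zpow_natCast,
    show (3 : ℕ) = 2 + 1 by norm_num, pow_succ, xa_sq, a_mul_xa,
    sub_eq_add_neg, neg_n hn]

lemma xa_zpow_four (i : ZMod (2 * n)) : xa i ^ (4 : ℤ) = 1 := by
  rw [show (4 : ℤ) = ((4 : ℕ) : ℤ) by norm_num, zpow_natCast, xa_pow_four]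

lemma mem_zpowers_xa (hn : 0 < n) (i : ZMod (2 * n)) (g : QuaternionGroup n) :
    g ∈ Subgroup.zpowers (xa i) ↔
      g = 1 ∨ g = xa i ∨ g = a n ∨ g = xa (i + (n : ZMod (2 * n))) := by
  constructor
  · intro hg
    obtain ⟨m, rfl⟩ := Subgroup.mem_zpowers_iff.mp hg
    have key : xa i ^ m = xa i ^ (m % 4) := by
      conv_lhs => rw [show m = 4 * (m / 4) + m % 4 from (Int.mul_ediv_add_emod m 4).symm]
      rw [zpow_add, zpow_mul, xa_zpow_four, one_zpow, one_mul]
    have h1 : 0 ≤ m % 4 := Int.emod_nonneg m (by norm_num)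
    have h2 : m % 4 < 4 := Int.emod_lt_of_pos m (by norm_num)
    rcases (by omega : m % 4 = 0 ∨ m % 4 = 1 ∨ m % 4 = 2 ∨ m % 4 = 3) with h | h | h | h <;>
      rw [key, h]
    · exact Or.inl (zpow_zero _)
    · exact Or.inr (Or.inl (zpow_one _))
    · exact Or.inr (Or.inr (Or.inl (xa_zpow_two i)))
    · exact Or.inr (Or.inr (Or.inr (xa_zpow_three hn i)))
  · rintro (rfl | rfl | rfl | rfl)
    · exact Subgroup.mem_zpowers_iff.mpr ⟨0, zpow_zero _⟩
    · exact Subgroup.mem_zpowers_iff.mpr ⟨1, zpow_one _⟩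
    · exact Subgroup.mem_zpowers_iff.mpr ⟨2, xa_zpow_two i⟩
    · exact Subgroup.mem_zpowers_iff.mpr ⟨3, xa_zpow_three hn i⟩

lemma adj_iff (G : Type*) [Group G] (x y : G) :
    (powerGraph G).Adj x y ↔
      x ≠ y ∧ (x ∈ Subgroup.zpowers y ∨ y ∈ Subgroup.zpowers x) := Iff.rfl

lemma adj_a_xa (hn : 0 < n) (j i : ZMod (2 * n)) :
    (powerGraph (QuaternionGroup n)).Adj (a j) (xa i) ↔ j = 0 ∨ j = n := by
  rw [adj_iff]
  constructor
  · rintro ⟨-, h | h⟩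
    · rw [mem_zpowers_xa hn] at h
      rcases h with h | h | h | h
      · rw [one_def] at h
        exact Or.inl (by injection h)
      · exact absurd h (by simp)
      · exact Or.inr (by injection h)
      · exact absurd h (by simp)
    · exact absurd h (not_xa_mem_zpowers_a i j)
  · rintro (rfl | rfl)
    · exact ⟨(by intro hc; cases hc), Or.inl ((mem_zpowers_xa hn i _).mpr (Or.inl one_def.symm))⟩
    · exact ⟨by simp, Or.inl ((mem_zpowers_xa hn i _).mpr (Or.inr (Or.inr (Or.inl rfl))))⟩

lemma add_n_cancel (hn : 0 < n) (i j : ZMod (2 * n)) (h : i = j + (n : ZMod (2 * n))) :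
    j = i + (n : ZMod (2 * n)) := by
  rw [h, add_assoc, n_add_n hn, add_zero]

lemma adj_xa_xa (hn : 0 < n) (j i : ZMod (2 * n)) :
    (powerGraph (QuaternionGroup n)).Adj (xa j) (xa i) ↔ j = i + (n : ZMod (2 * n)) := by
  rw [adj_iff]
  constructor
  · rintro ⟨hne, h | h⟩
    · rw [mem_zpowers_xa hn] at h
      rcases h with h | h | h | h
      · rw [one_def] at h; exact absurd h (by intro hc; cases hc)
      · exact absurd h (by simpa using hne)
      · exact absurd h (by simp)
      · exact xa.inj h
    · rw [mem_zpowers_xa hn] at h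
      rcases h with h | h | h | h
      · rw [one_def] at h; exact absurd h (by intro hc; cases hc)
      · exact absurd h.symm (by simpa using hne)
      · exact absurd h (by simp)
      · exact add_n_cancel hn i j (xa.inj h)
  · rintro rfl
    refine ⟨?_, Or.inl ((mem_zpowers_xa hn i _).mpr (Or.inr (Or.inr (Or.inr rfl))))⟩
    simp only [ne_eq, xa.injEq]
    intro h
    exact n_ne_zero hn (by rwa [add_eq_left] at h)

lemma neigh_xa (hn : 0 < n) (i : ZMod (2 * n)) :
    {u | (powerGraph (QuaternionGroup n)).Adj (xa i) u} =
      {a 0, a n, xa (i + (n : ZMod (2 * n)))} := by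
  ext u
  simp only [Set.mem_setOf_eq, Set.mem_insert_iff, Set.mem_singleton_iff]
  rw [SimpleGraph.adj_comm]
  cases u with
  | a j =>
      rw [adj_a_xa hn]
      constructor
      · rintro (rfl | rfl)
        · exact Or.inl rfl
        · exact Or.inr (Or.inl rfl)
      · rintro (h | h | h)
        · exact Or.inl (by injection h)
        · exact Or.inr (by injection h)
        · exact absurd h (by simp)
  | xa j =>
      rw [adj_xa_xa hn]
      constructor
      · rintro rfl; exact Or.inr (Or.inr rfl)
      · rintro (h | h | h)
        · exact absurd h (by intro hc; cases hc)
        · exact absurd h (by simp)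
        · exact xa.inj h

lemma sdeg_xa [NeZero n] (hn : 0 < n) (i : ZMod (2 * n)) :
    sdeg (powerGraph (QuaternionGroup n)) (xa i) = 3 := by
  rw [sdeg, neigh_xa hn]
  rw [Set.ncard_insert_of_notMem (by
        simp only [Set.mem_insert_iff, Set.mem_singleton_iff, a.injEq]
        push_neg
        exact ⟨fun h => n_ne_zero hn h.symm, (by intro hc; cases hc)⟩),
      Set.ncard_insert_of_notMem (by simp),
      Set.ncard_singleton]

lemma smE {V : Type*} (G : SimpleGraph V) (u v : V) :
    somborMatrix G u v =
      if G.Adj u v then Real.sqrt ((sdeg G u : ℝ) ^ 2 + (sdeg G v : ℝ) ^ 2) else 0 := rfl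

lemma sqrt18 : Real.sqrt (((3 : ℕ) : ℝ) ^ 2 + ((3 : ℕ) : ℝ) ^ 2) = 3 * Real.sqrt 2 := by
  rw [show (((3 : ℕ) : ℝ) ^ 2 + ((3 : ℕ) : ℝ) ^ 2) = 3 ^ 2 * 2 by norm_num,
    Real.sqrt_mul (by positivity), Real.sqrt_sq (by norm_num)]

end Stmt17Aux

open Stmt17Aux QuaternionGroup in
theorem stmt17 (n : ℕ) [NeZero n] (hn : 2 ≤ n) :
    n ≤ Module.finrank ℝ (LinearMap.ker (Matrix.toLin'
      (somborMatrix (powerGraph (QuaternionGroup n)) -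
        (-3 * Real.sqrt 2) • (1 : Matrix (QuaternionGroup n) (QuaternionGroup n) ℝ)))) := by
  classical
  have hn0 : 0 < n := by omega
  set S := somborMatrix (powerGraph (QuaternionGroup n)) with hS
  set K := LinearMap.ker (Matrix.toLin'
      (S - (-3 * Real.sqrt 2) • (1 : Matrix (QuaternionGroup n) (QuaternionGroup n) ℝ))) with hK
  have hnn : ∀ i : ZMod (2 * n), i + (n : ZMod (2 * n)) + (n : ZMod (2 * n)) = i := by
    intro i; rw [add_assoc, n_add_n hn0, add_zero]
  have hiq : ∀ i : ZMod (2 * n), i + (n : ZMod (2 * n)) ≠ i := by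
    intro i h
    exact n_ne_zero hn0 (by rwa [add_eq_left] at h)
  -- row computation
  have hrow : ∀ (i : ZMod (2 * n)) (u : QuaternionGroup n),
      S u (xa i) - S u (xa (i + (n : ZMod (2 * n)))) =
        (-3 * Real.sqrt 2) *
          ((Pi.single (xa i) (1 : ℝ) : QuaternionGroup n → ℝ) u -
            (Pi.single (xa (i + (n : ZMod (2 * n)))) (1 : ℝ) : QuaternionGroup n → ℝ) u) := by
    intro i u
    cases u with
    | a j =>
        have e1 : S (a j) (xa i) = S (a j) (xa (i + (n : ZMod (2 * n)))) := by
          rw [hS, smE, smE, sdeg_xa hn0, sdeg_xa hn0]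
          by_cases h : j = 0 ∨ j = (n : ZMod (2 * n))
          · rw [if_pos ((adj_a_xa hn0 _ _).mpr h), if_pos ((adj_a_xa hn0 _ _).mpr h)]
          · rw [if_neg (fun hc => h ((adj_a_xa hn0 _ _).mp hc)),
              if_neg (fun hc => h ((adj_a_xa hn0 _ _).mp hc))]
        have e2 : (Pi.single (xa i) (1 : ℝ) : QuaternionGroup n → ℝ) (a j) = 0 := by
          rw [Pi.single_apply, if_neg (by simp)]
        have e3 : (Pi.single (xa (i + (n : ZMod (2 * n)))) (1 : ℝ) : QuaternionGroup n → ℝ) (a j) = 0 := by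
          rw [Pi.single_apply, if_neg (by simp)]
        rw [e1, e2, e3]; ring
    | xa j =>
        have hv1 : S (xa j) (xa i) =
            if j = i + (n : ZMod (2 * n)) then 3 * Real.sqrt 2 else 0 := by
          rw [hS, smE, sdeg_xa hn0, sdeg_xa hn0]
          by_cases h : j = i + (n : ZMod (2 * n))
          · rw [if_pos ((adj_xa_xa hn0 _ _).mpr h), if_pos h, sqrt18]
          · rw [if_neg (fun hc => h ((adj_xa_xa hn0 _ _).mp hc)), if_neg h]
        have hv2 : S (xa j) (xa (i + (n : ZMod (2 * n)))) =
            if j = i then 3 * Real.sqrt 2 else 0 := by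
          rw [hS, smE, sdeg_xa hn0, sdeg_xa hn0]
          by_cases h : j = i
          · rw [if_pos ((adj_xa_xa hn0 _ _).mpr (by rw [h, hnn])), if_pos h, sqrt18]
          · rw [if_neg (fun hc => h ?_), if_neg h]
            have := (adj_xa_xa hn0 _ _).mp hc
            rw [this, hnn]
        have hs1 : (Pi.single (xa i) (1 : ℝ) : QuaternionGroup n → ℝ) (xa j) = if j = i then 1 else 0 := by
          rw [Pi.single_apply]
          by_cases h : j = i
          · rw [if_pos (by rw [h]), if_pos h]
          · rw [if_neg (by simpa using h), if_neg h]
        have hs2 : (Pi.single (xa (i + (n : ZMod (2 * n)))) (1 : ℝ) : QuaternionGroup n → ℝ) (xa j) =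
            if j = i + (n : ZMod (2 * n)) then 1 else 0 := by
          rw [Pi.single_apply]
          by_cases h : j = i + (n : ZMod (2 * n))
          · rw [if_pos (by rw [h]), if_pos h]
          · rw [if_neg (by simpa using h), if_neg h]
        rw [hv1, hv2, hs1, hs2]
        by_cases h1 : j = i
        · have h2 : ¬ j = i + (n : ZMod (2 * n)) := by
            rw [h1]; exact fun hc => hiq i hc.symm
          rw [if_pos h1, if_neg h2, if_pos h1, if_neg h2]; ring
        · by_cases h2 : j = i + (n : ZMod (2 * n))
          · rw [if_pos h2, if_neg h1, if_neg h1, if_pos h2]; ring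
          · rw [if_neg h2, if_neg h1, if_neg h1, if_neg h2]; ring
  -- the family of kernel vectors
  set f : Fin n → (QuaternionGroup n → ℝ) := fun k =>
    Pi.single (xa (((k : ℕ) : ZMod (2 * n)))) 1 -
      Pi.single (xa ((((k : ℕ) : ZMod (2 * n))) + (n : ZMod (2 * n)))) 1 with hf
  have hmem : ∀ k, f k ∈ K := by
    intro k
    rw [hK, LinearMap.mem_ker, Matrix.toLin'_apply, Matrix.sub_mulVec,
      Matrix.smul_mulVec, Matrix.one_mulVec, sub_eq_zero]
    rw [hf]
    funext u
    rw [Matrix.mulVec_sub, Matrix.mulVec_single, Matrix.mulVec_single]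
    have := hrow ((k : ℕ) : ZMod (2 * n)) u
    simp only [Pi.sub_apply, Pi.smul_apply, smul_eq_mul, mul_one]
    simpa using this
  have hcastinj : ∀ s t : ℕ, s < 2 * n → t < 2 * n →
      ((s : ZMod (2 * n)) = (t : ZMod (2 * n))) → s = t := by
    intro s t hs ht h
    have h2 := congrArg ZMod.val h
    rwa [ZMod.val_cast_of_lt hs, ZMod.val_cast_of_lt ht] at h2
  have hli : LinearIndependent ℝ f := by
    rw [Fintype.linearIndependent_iff]
    intro g hg k0
    have h0 := congrFun hg (xa (((k0 : ℕ) : ZMod (2 * n))))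
    rw [Finset.sum_apply, Pi.zero_apply] at h0
    have hterm : ∀ k : Fin n,
        (g k • f k) (xa (((k0 : ℕ) : ZMod (2 * n)))) = if k = k0 then g k else 0 := by
      intro k
      have hA : (Pi.single (xa (((k : ℕ) : ZMod (2 * n)))) (1 : ℝ) : QuaternionGroup n → ℝ)
          (xa (((k0 : ℕ) : ZMod (2 * n)))) = if k = k0 then 1 else 0 := by
        rw [Pi.single_apply]
        by_cases h : k = k0
        · rw [if_pos (by rw [h]), if_pos h]
        · rw [if_neg ?_, if_neg h]
          simp only [ne_eq, xa.injEq]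
          intro hc
          exact h (Fin.ext (hcastinj _ _ (by omega) (by omega) hc)).symm
      have hB : (Pi.single (xa ((((k : ℕ) : ZMod (2 * n))) + (n : ZMod (2 * n)))) (1 : ℝ) :
            QuaternionGroup n → ℝ)
          (xa (((k0 : ℕ) : ZMod (2 * n)))) = 0 := by
        rw [Pi.single_apply, if_neg ?_]
        simp only [ne_eq, xa.injEq]
        rw [show (((k : ℕ) : ZMod (2 * n))) + (n : ZMod (2 * n)) =
          ((((k : ℕ) + n : ℕ)) : ZMod (2 * n)) by push_cast; ring]
        intro hc
        have hk0 := (k0 : ℕ).lt_of_lt_of_le k0.isLt (le_refl n) |>.trans_le (by omega : n ≤ 2*n)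
        have := hcastinj _ _ (by omega) (by omega) hc
        omega
      rw [hf]
      simp only [Pi.smul_apply, Pi.sub_apply, smul_eq_mul, hA, hB]
      by_cases h : k = k0
      · rw [if_pos h, if_pos h]; ring
      · rw [if_neg h, if_neg h]; ring
    rw [Finset.sum_congr rfl (fun k _ => hterm k)] at h0
    simpa using h0
  let F : Fin n → K := fun k => ⟨f k, hmem k⟩
  have hliF : LinearIndependent ℝ F :=
    LinearIndependent.of_comp K.subtype hli
  have hcard := hliF.fintype_card_le_finrank
  simpa using hcard
end

section
/- For every odd integer n ≥ 3, the real number −(2n+1)·√2 is a Sombor eigenvalue of the order super power graph P^o(Q_{4n}) of the generalized quaternion group Q_{4n} with multiplicity at least 2n−1; that is, the kernel of S(P^o(Q_{4n})) + (2n+1)·√2·I has dimension at least 2n−1 over ℝ. -/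
open Polynomial
open scoped Classical

namespace Stmt18Aux
open QuaternionGroup

variable {n : ℕ} [NeZero n]

lemma two_n_ne : (2 * n) ≠ 0 := Nat.mul_ne_zero two_ne_zero (NeZero.ne n)

lemma orderOf_a_dvd (k : ZMod (2 * n)) : orderOf (a k : QuaternionGroup n) ∣ 2 * n := by
  apply orderOf_dvd_of_pow_eq_one
  have : (a k : QuaternionGroup n) = (a 1) ^ (k.val) := by
    rw [a_one_pow, ZMod.natCast_zmod_val]
  rw [this, ← pow_mul, mul_comm k.val (2*n), pow_mul, a_one_pow_n, one_pow]

lemma orderOf_a_ne_four (hodd : Odd n) (k : ZMod (2 * n)) :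
    orderOf (a k : QuaternionGroup n) ≠ 4 := by
  intro h
  have h4 : (4 : ℕ) ∣ 2 * n := h ▸ orderOf_a_dvd k
  have : (2 : ℕ) ∣ n := by
    have : 2 * 2 ∣ 2 * n := by norm_num at h4 ⊢; exact h4
    exact (mul_dvd_mul_iff_left (two_ne_zero)).mp this
  rw [Nat.not_even_iff_odd.symm] at hodd
  exact hodd (even_iff_two_dvd.mpr this)

lemma order_four_xa (hodd : Odd n) {x : QuaternionGroup n} (hx : orderOf x = 4) :
    ∃ m, x = xa m := by
  cases x with
  | a k => exact absurd hx (orderOf_a_ne_four hodd k)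
  | xa m => exact ⟨m, rfl⟩

/-- the elements `a i` form a subgroup -/
def aSub (n : ℕ) : Subgroup (QuaternionGroup n) where
  carrier := Set.range a
  mul_mem' := by rintro x y ⟨i, rfl⟩ ⟨j, rfl⟩; exact ⟨i + j, (a_mul_a i j).symm⟩
  one_mem' := ⟨0, one_def.symm⟩
  inv_mem' := by
    rintro x ⟨i, rfl⟩
    refine ⟨-i, ?_⟩
    apply (inv_eq_of_mul_eq_one_right _).symm
    rw [a_mul_a]
    rw [add_neg_cancel, ← one_def]

omit [NeZero n] in
lemma xa_not_mem_zpowers_a (i m : ZMod (2 * n)) :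
    (xa i : QuaternionGroup n) ∉ Subgroup.zpowers (a m) := by
  intro h
  have hle : Subgroup.zpowers (a m : QuaternionGroup n) ≤ aSub n :=
    Subgroup.zpowers_le.mpr ⟨m, rfl⟩
  obtain ⟨j, hj⟩ := hle h
  cases hj

lemma a_k_eq (hodd : Odd n) {k : ZMod (2 * n)} (h : orderOf (a k : QuaternionGroup n) ∣ 4) :
    k = 0 ∨ k = (n : ZMod (2 * n)) := by
  have h2 : orderOf (a k : QuaternionGroup n) ∣ 2 := by
    have := Nat.dvd_gcd h (orderOf_a_dvd k)
    have hg : Nat.gcd 4 (2 * n) = 2 := by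
      have : Nat.gcd 4 (2 * n) = 2 * Nat.gcd 2 n := by
        rw [show (4:ℕ) = 2 * 2 by norm_num, Nat.gcd_mul_left]
      rw [this, Nat.Coprime.gcd_eq_one, mul_one]
      exact (Nat.coprime_two_left).mpr hodd
    rwa [hg] at this
  have hpow : (a k : QuaternionGroup n) ^ 2 = 1 := orderOf_dvd_iff_pow_eq_one.mp h2
  have hkk : k + k = 0 := by
    rw [pow_two, a_mul_a, one_def] at hpow
    injection hpow
  -- now val argument
  have hdvd : (2 * n) ∣ 2 * k.val := by
    have : ((2 * k.val : ℕ) : ZMod (2 * n)) = 0 := by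
      push_cast [ZMod.natCast_zmod_val]
      exact (two_mul k).trans hkk
    exact (ZMod.natCast_eq_zero_iff _ _).mp this
  have hn : n ∣ k.val := by
    have : 2 * n ∣ 2 * k.val := hdvd
    exact (mul_dvd_mul_iff_left (two_ne_zero)).mp this
  have hlt : k.val < 2 * n := ZMod.val_lt k
  obtain ⟨c, hc⟩ := hn
  have hcle : c < 2 := by
    by_contra hcge
    push_neg at hcge
    have := Nat.mul_le_mul_left n hcge
    omega
  interval_cases c
  · left
    have : k.val = 0 := by omega
    rwa [← ZMod.val_eq_zero]
  · right
    have : k.val = n := by omega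
    rw [← ZMod.natCast_zmod_val k, this]

variable (n) in
noncomputable def Gr : SimpleGraph (QuaternionGroup n) :=
  superGraph (powerGraph (QuaternionGroup n)) (orderRel _) (orderRel_equivalence _)

omit [NeZero n] in
lemma gr_adj {x y : QuaternionGroup n} : (Gr n).Adj x y ↔ x ≠ y ∧
    (orderRel _ x y ∨ ∃ x' y', orderRel _ x x' ∧ orderRel _ y y' ∧
      (powerGraph (QuaternionGroup n)).Adj x' y') := Iff.rfl

omit [NeZero n] in
lemma pg_adj {x y : QuaternionGroup n} : (powerGraph (QuaternionGroup n)).Adj x y ↔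
    x ≠ y ∧ (x ∈ Subgroup.zpowers y ∨ y ∈ Subgroup.zpowers x) := Iff.rfl

lemma nbhd (hodd : Odd n) (j : ZMod (2 * n)) :
    {u | (Gr n).Adj (xa j) u} =
      ({a 0, a (n : ZMod (2 * n))} ∪ Set.range xa) \ {xa j} := by
  ext u
  simp only [Set.mem_setOf_eq, Set.mem_diff, Set.mem_union, Set.mem_insert_iff,
    Set.mem_singleton_iff, Set.mem_range, gr_adj]
  constructor
  · rintro ⟨hne, hca⟩
    refine ⟨?_, fun h => hne h.symm⟩
    rcases hca with h | ⟨x', y', h1, h2, hp⟩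
    · -- same order: order 4
      obtain ⟨m, rfl⟩ := order_four_xa hodd ((orderOf_xa j ▸ h : (4:ℕ) = orderOf u)).symm
      exact Or.inr ⟨m, rfl⟩
    · replace h1 : orderOf x' = 4 :=
        ((show orderOf (xa j : QuaternionGroup n) = orderOf x' from h1).symm.trans
          (orderOf_xa j))
      obtain ⟨i', rfl⟩ := order_four_xa hodd h1
      rw [pg_adj] at hp
      rcases hp.2 with hz | hz
      · -- xa i' ∈ zpowers y'
        cases y' with
        | a m => exact absurd hz (xa_not_mem_zpowers_a i' m)
        | xa m =>
          replace h2 : orderOf u = 4 :=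
            (show orderOf u = orderOf (xa m : QuaternionGroup n) from h2).trans (orderOf_xa m)
          obtain ⟨m', rfl⟩ := order_four_xa hodd h2
          exact Or.inr ⟨m', rfl⟩
      · -- y' ∈ zpowers (xa i')
        have hdvd : orderOf u ∣ 4 := by
          rw [show orderOf u = orderOf y' from h2, ← orderOf_xa (n := n) i']
          exact orderOf_dvd_of_mem_zpowers hz
        cases u with
        | a k =>
          rcases a_k_eq hodd hdvd with rfl | rfl
          · exact Or.inl (Or.inl rfl)
          · exact Or.inl (Or.inr rfl)
        | xa m => exact Or.inr ⟨m, rfl⟩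
  · rintro ⟨hmem, hne⟩
    rcases hmem with (rfl | rfl) | ⟨m, rfl⟩
    · refine ⟨(fun h => by cases h), Or.inr ⟨xa j, a 0, rfl, rfl, pg_adj.mpr ⟨(fun h => by cases h), Or.inr ?_⟩⟩⟩
      rw [← one_def]; exact Subgroup.one_mem _
    · refine ⟨by simp, Or.inr ⟨xa j, a n, rfl, rfl, pg_adj.mpr ⟨by simp, Or.inr ?_⟩⟩⟩
      rw [← xa_sq j]; exact Subgroup.pow_mem _ (Subgroup.mem_zpowers _) 2
    · exact ⟨fun h => hne h.symm, Or.inl (by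
        show orderOf _ = orderOf _
        rw [orderOf_xa, orderOf_xa])⟩

lemma a_zero_ne_a_n : (a 0 : QuaternionGroup n) ≠ a (n : ZMod (2 * n)) := by
  haveI : NeZero (2 * n) := ⟨two_n_ne⟩
  intro h
  injection h with h'
  have := (ZMod.natCast_eq_zero_iff n (2 * n)).mp h'.symm
  have h1 := NeZero.pos n
  have := Nat.le_of_dvd h1 this
  omega

lemma sdeg_xa (hodd : Odd n) (j : ZMod (2 * n)) : sdeg (Gr n) (xa j) = 2 * n + 1 := by
  haveI : NeZero (2 * n) := ⟨two_n_ne⟩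
  have hdisj : Disjoint ({a 0, a (n : ZMod (2 * n))} : Set (QuaternionGroup n)) (Set.range xa) := by
    rw [Set.disjoint_left]
    rintro x (rfl | rfl) ⟨m, hm⟩ <;> cases hm
  have hsub : ({xa j} : Set (QuaternionGroup n)) ⊆ ({a 0, a (n : ZMod (2 * n))} ∪ Set.range xa) :=
    Set.singleton_subset_iff.mpr (Or.inr ⟨j, rfl⟩)
  have hinj : Function.Injective (xa : ZMod (2 * n) → QuaternionGroup n) := by
    intro i j h; injection h
  rw [sdeg, nbhd hodd j, Set.ncard_diff hsub, Set.ncard_union_eq hdisj,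
    Set.ncard_pair a_zero_ne_a_n, Set.ncard_singleton, ← Set.image_univ,
    Set.ncard_image_of_injective _ hinj, Set.ncard_univ, Nat.card_zmod]
  omega
variable (n) in
noncomputable def M : Matrix (QuaternionGroup n) (QuaternionGroup n) ℝ :=
  somborMatrix (Gr n) + ((2 * (n : ℝ) + 1) * Real.sqrt 2) • 1

lemma sqrt_c : Real.sqrt (((2 * n + 1 : ℕ) : ℝ) ^ 2 + ((2 * n + 1 : ℕ) : ℝ) ^ 2) =
    (2 * (n : ℝ) + 1) * Real.sqrt 2 := by
  push_cast
  rw [show (2 * (n:ℝ) + 1) ^ 2 + (2 * (n:ℝ) + 1) ^ 2 =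
      ((2 * (n:ℝ) + 1) * Real.sqrt 2) ^ 2 by rw [mul_pow, Real.sq_sqrt (by norm_num)]; ring]
  exact Real.sqrt_sq (by positivity)

lemma adj_xa_xa {i m : ZMod (2 * n)} (h : i ≠ m) : (Gr n).Adj (xa i) (xa m) := by
  refine ⟨by simpa using h, Or.inl ?_⟩
  show orderOf _ = orderOf _
  rw [orderOf_xa, orderOf_xa]

lemma entry_xa_xa (hodd : Odd n) (i m : ZMod (2 * n)) :
    M n (xa i) (xa m) = (2 * (n : ℝ) + 1) * Real.sqrt 2 := by
  by_cases h : i = m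
  · subst h
    simp only [M, Matrix.add_apply, Matrix.smul_apply, Matrix.one_apply_eq, smul_eq_mul, mul_one,
      somborMatrix, Matrix.of_apply]
    rw [if_neg ((Gr n).loopless.irrefl (xa i)), zero_add]
  · simp only [M, Matrix.add_apply, Matrix.smul_apply, smul_eq_mul,
      somborMatrix, Matrix.of_apply]
    rw [if_pos (adj_xa_xa h), Matrix.one_apply_ne (by simpa using h), mul_zero, add_zero,
      sdeg_xa hodd, sdeg_xa hodd, sqrt_c]

lemma adj_a_xa (k j j' : ZMod (2 * n)) (h : (Gr n).Adj (a k) (xa j)) :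
    (Gr n).Adj (a k) (xa j') := by
  obtain ⟨-, h⟩ := h
  refine ⟨by simp, ?_⟩
  rcases h with h | ⟨x', y', h1, h2, hp⟩
  · left
    show orderOf _ = orderOf _
    rw [orderOf_xa]
    exact ((show orderOf (a k : QuaternionGroup n) = orderOf (xa j : QuaternionGroup n)
      from h).trans (orderOf_xa j)).symm ▸ rfl
  · refine Or.inr ⟨x', y', h1, ?_, hp⟩
    show orderOf _ = orderOf _
    rw [orderOf_xa, ← orderOf_xa (n := n) j]
    exact h2

lemma entry_a_xa (hodd : Odd n) (k j : ZMod (2 * n)) :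
    M n (a k) (xa j) = M n (a k) (xa 0) := by
  have hadj : (Gr n).Adj (a k) (xa j) ↔ (Gr n).Adj (a k) (xa 0) :=
    ⟨adj_a_xa k j 0, adj_a_xa k 0 j⟩
  simp only [M, Matrix.add_apply, Matrix.smul_apply, smul_eq_mul,
    somborMatrix, Matrix.of_apply]
  rw [Matrix.one_apply_ne (by simp), Matrix.one_apply_ne (by simp), sdeg_xa hodd, sdeg_xa hodd]
  by_cases h : (Gr n).Adj (a k) (xa j)
  · rw [if_pos h, if_pos (hadj.mp h)]
  · rw [if_neg h, if_neg (fun h' => h (hadj.mpr h'))]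

lemma col_eq (hodd : Odd n) (u : QuaternionGroup n) (j : ZMod (2 * n)) :
    M n u (xa j) = M n u (xa 0) := by
  cases u with
  | a k => exact entry_a_xa hodd k j
  | xa i => rw [entry_xa_xa hodd, entry_xa_xa hodd]

lemma mem_ker (hodd : Odd n) (j : ZMod (2 * n)) :
    (Pi.single (xa j) (1:ℝ) - Pi.single (xa 0) 1) ∈
      LinearMap.ker (Matrix.toLin' (M n)) := by
  rw [LinearMap.mem_ker, Matrix.toLin'_apply, Matrix.mulVec_sub]
  funext u
  simp only [Matrix.mulVec_single, Pi.sub_apply, Pi.zero_apply, mul_one]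
  simp only [MulOpposite.op_one, one_smul]
  show M n u (xa j) - M n u (xa 0) = 0
  rw [col_eq hodd u j, sub_self]

end Stmt18Aux

theorem stmt18 (n : ℕ) [NeZero n] (hn : 3 ≤ n) (hodd : Odd n) :
    2 * n - 1 ≤ Module.finrank ℝ (LinearMap.ker (Matrix.toLin'
      (somborMatrix (superGraph (powerGraph (QuaternionGroup n))
          (orderRel (QuaternionGroup n)) (orderRel_equivalence (QuaternionGroup n))) +
        ((2 * (n : ℝ) + 1) * Real.sqrt 2) •
          (1 : Matrix (QuaternionGroup n) (QuaternionGroup n) ℝ)))) := by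
  open QuaternionGroup Stmt18Aux in
  show 2 * n - 1 ≤ Module.finrank ℝ (LinearMap.ker (Matrix.toLin' (Stmt18Aux.M n)))
  haveI : NeZero (2 * n) := ⟨Stmt18Aux.two_n_ne⟩
  set F := Matrix.toLin' (Stmt18Aux.M n) with hF
  let ι := {j : ZMod (2 * n) // j ≠ 0}
  let v : ι → (QuaternionGroup n → ℝ) :=
    fun j => Pi.single (QuaternionGroup.xa j.1) 1 - Pi.single (QuaternionGroup.xa 0) 1
  have hker : ∀ j : ι, v j ∈ LinearMap.ker F := fun j => Stmt18Aux.mem_ker hodd j.1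
  have hv : LinearIndependent ℝ v := by
    rw [Fintype.linearIndependent_iff]
    intro g h j₀
    have h0 := congrFun h (QuaternionGroup.xa j₀.1)
    rw [Finset.sum_apply] at h0
    rw [Finset.sum_eq_single j₀] at h0
    · simpa [v, Pi.single_apply, j₀.2] using h0
    · intro b _ hb
      have hb1 : QuaternionGroup.xa (n := n) j₀.1 ≠ QuaternionGroup.xa b.1 := by
        simp only [ne_eq, QuaternionGroup.xa.injEq]
        exact fun h => hb (Subtype.ext h.symm)
      have hb2 : QuaternionGroup.xa (n := n) j₀.1 ≠ QuaternionGroup.xa 0 := by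
        simp only [ne_eq, QuaternionGroup.xa.injEq]
        exact j₀.2
      simp [v, Pi.single_apply, hb1, hb2]
    · intro h'; exact absurd (Finset.mem_univ j₀) h'
  let w : ι → LinearMap.ker F := fun j => ⟨v j, hker j⟩
  have hw : LinearIndependent ℝ w :=
    LinearIndependent.of_comp (LinearMap.ker F).subtype hv
  have hcard : Fintype.card ι = 2 * n - 1 := by
    have : Fintype.card ι = Fintype.card (ZMod (2 * n)) - 1 := by
      simp [ι, Fintype.card_subtype_compl]
    rw [this, ZMod.card]
  calc 2 * n - 1 = Fintype.card ι := hcard.symm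
    _ ≤ Module.finrank ℝ (LinearMap.ker F) := hw.fintype_card_le_finrank
end
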